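/- Let Z and W be independent real random variables on a probability space (Ω, 𝓕, ℙ), each distributed as the Gaussian with mean 0 and variance 2, and let a ∈ ℝ. Then ℙ( |a + Z| ≥ |W| ) = (1/2)·(1 + erf(a/(2√2))²). -/

import Mathlib

open Real MeasureTheory ProbabilityTheory intervalIntegral

/-- The Gauss error function `erf(x) = (2/√π) ∫₀ˣ e^{−t²} dt`. -/
noncomputable def erf (x : ℝ) : ℝ :=
  (2 / Real.sqrt Real.pi) * ∫ t in (0 : ℝ)..x, Real.exp (-t ^ 2)

lemma erf_neg (x : ℝ) : erf (-x) = - erf x := by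
  unfold erf
  have h : ∫ t in (0:ℝ)..(-x), Real.exp (-t ^ 2)
      = - ∫ t in (0:ℝ)..x, Real.exp (-t ^ 2) := by
    have h1 : ∫ t in (0:ℝ)..(-x), Real.exp (-t ^ 2)
        = ∫ t in (0:ℝ)..(-x), Real.exp (-(-t) ^ 2) := by
      congr 1; ext t; ring_nf
    rw [h1, intervalIntegral.integral_comp_neg (fun t => Real.exp (-t ^ 2)),
      neg_zero, intervalIntegral.integral_symm, neg_neg]
  rw [h]; ring

lemma pdf_eq (x : ℝ) : gaussianPDFReal 0 2 x = (2 * Real.sqrt π)⁻¹ * Real.exp (-(4:ℝ)⁻¹ * x ^ 2) := by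
  rw [gaussianPDFReal]
  push_cast
  rw [show (2 * π * 2 : ℝ) = 2^2 * π by ring, Real.sqrt_mul (by positivity), Real.sqrt_sq (by norm_num)]
  rw [mul_inv]
  congr 1
  ring

lemma integral_Iic_pdf (c : ℝ) :
    ∫ x in Set.Iic c, gaussianPDFReal 0 2 x = 1/2 + erf (c/2)/2 := by
  have hint : Integrable (fun x : ℝ => Real.exp (-(4:ℝ)⁻¹ * x ^ 2)) :=
    integrable_exp_neg_mul_sq (by norm_num)
  simp_rw [pdf_eq, MeasureTheory.integral_const_mul]
  have h0 : ∫ x in Set.Iic (0:ℝ), Real.exp (-(4:ℝ)⁻¹ * x ^ 2) = Real.sqrt π := by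
    have this := integral_comp_neg_Iic (0:ℝ) (fun x => Real.exp (-(4:ℝ)⁻¹ * x ^ 2))
    simp only [neg_zero, neg_sq] at this
    rw [this, integral_gaussian_Ioi ((4:ℝ)⁻¹)]
    rw [show (π / (4:ℝ)⁻¹) = 2^2 * π by ring, Real.sqrt_mul (by positivity),
      Real.sqrt_sq (by norm_num)]
    ring
  have hsplit : ∫ x in Set.Iic c, Real.exp (-(4:ℝ)⁻¹ * x ^ 2)
      = Real.sqrt π + ∫ x in (0:ℝ)..c, Real.exp (-(4:ℝ)⁻¹ * x ^ 2) := by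
    rw [← h0]
    have := intervalIntegral.integral_Iic_sub_Iic hint.integrableOn hint.integrableOn
      (a := (0:ℝ)) (b := c) (μ := volume)
    linarith [this]
  have hiv : ∫ x in (0:ℝ)..c, Real.exp (-(4:ℝ)⁻¹ * x ^ 2)
      = Real.sqrt π * erf (c/2) := by
    have heq : ∀ x : ℝ, Real.exp (-(4:ℝ)⁻¹ * x ^ 2) = Real.exp (-(x/2) ^ 2) := by
      intro x; ring_nf
    simp_rw [heq]
    rw [intervalIntegral.integral_comp_div (a := 0) (b := c)
      (f := fun t => Real.exp (-t ^ 2)) (by norm_num : (2:ℝ) ≠ 0)]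
    unfold erf
    have hpi : Real.sqrt π ≠ 0 := by positivity
    field_simp
    rw [zero_div, smul_eq_mul]
  rw [hsplit, hiv]
  have hpi : Real.sqrt π ≠ 0 := by positivity
  field_simp

lemma half_add_erf_nonneg (x : ℝ) : 0 ≤ 1/2 + erf x / 2 := by
  have h := integral_Iic_pdf (2*x)
  have h2 : (2*x)/2 = x := by ring
  rw [h2] at h
  rw [← h]
  exact setIntegral_nonneg measurableSet_Iic fun y _ => gaussianPDFReal_nonneg 0 2 y

lemma gauss_Iic (c : ℝ) :
    gaussianReal 0 2 (Set.Iic c) = ENNReal.ofReal (1/2 + erf (c/2)/2) := by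
  rw [gaussianReal_apply_eq_integral 0 two_ne_zero, integral_Iic_pdf]

lemma gauss_map_neg : (gaussianReal 0 2).map (fun x => -1 * x) = gaussianReal 0 2 := by
  rw [gaussianReal_map_const_mul (-1)]
  norm_num

lemma gauss_Ici (c : ℝ) :
    gaussianReal 0 2 (Set.Ici c) = ENNReal.ofReal (1/2 - erf (c/2)/2) := by
  have hm : Measurable (fun x : ℝ => -1 * x) := by fun_prop
  have h : gaussianReal 0 2 (Set.Ici c) = gaussianReal 0 2 (Set.Iic (-c)) := by
    conv_rhs => rw [← gauss_map_neg]
    rw [Measure.map_apply hm measurableSet_Iic]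
    congr 1
    ext x
    simp only [Set.mem_preimage, Set.mem_Iic, Set.mem_Ici]
    constructor <;> intro hx <;> linarith
  rw [h, gauss_Iic, neg_div, erf_neg]
  ring_nf

lemma key_iff (a u v : ℝ) :
    |(u+v)/Real.sqrt 2| ≤ |a+(u-v)/Real.sqrt 2| ↔
      0 ≤ (a + Real.sqrt 2 * u) * (a - Real.sqrt 2 * v) := by
  have h2 : Real.sqrt 2 * Real.sqrt 2 = 2 := Real.mul_self_sqrt (by norm_num)
  have h2' : Real.sqrt 2 ≠ 0 := by positivity
  rw [← sq_le_sq, ← sub_nonneg]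
  have hid : (a+(u-v)/Real.sqrt 2)^2 - ((u+v)/Real.sqrt 2)^2
      = (a + Real.sqrt 2 * u) * (a - Real.sqrt 2 * v) := by
    have hs : Real.sqrt 2 ^ 2 = 2 := Real.sq_sqrt (by norm_num)
    field_simp
    linear_combination (-a*Real.sqrt 2*u + a*Real.sqrt 2*v + 2*u*v + u*v*Real.sqrt 2^2) * hs
  rw [hid]

noncomputable def Tlin : (ℝ × ℝ) →ₗ[ℝ] (ℝ × ℝ) :=
  Matrix.toLin (Module.Basis.finTwoProd ℝ) (Module.Basis.finTwoProd ℝ)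
    !![(Real.sqrt 2)⁻¹, -(Real.sqrt 2)⁻¹; (Real.sqrt 2)⁻¹, (Real.sqrt 2)⁻¹]

lemma Tlin_apply (p : ℝ × ℝ) :
    Tlin p = ((p.1 - p.2)/Real.sqrt 2, (p.1 + p.2)/Real.sqrt 2) := by
  have h2' : Real.sqrt 2 ≠ 0 := by positivity
  simp only [Tlin, Matrix.toLin_finTwoProd_apply, Prod.mk.injEq]
  constructor <;> (field_simp; try ring)

lemma Tlin_det : LinearMap.det Tlin = 1 := by
  have h2 : Real.sqrt 2 * Real.sqrt 2 = 2 := Real.mul_self_sqrt (by norm_num)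
  have h2' : Real.sqrt 2 ≠ 0 := by positivity
  rw [Tlin, LinearMap.det_toLin, Matrix.det_fin_two_of]
  field_simp
  rw [sq, h2]; norm_num

lemma Tlin_meas : Measurable Tlin :=
  Tlin.continuous_of_finiteDimensional.measurable

lemma map_Tlin_volume : Measure.map Tlin (volume : Measure (ℝ×ℝ)) = volume := by
  have hdet : LinearMap.det Tlin ≠ 0 := by rw [Tlin_det]; norm_num
  ext s hs
  rw [Measure.map_apply Tlin_meas hs,
    Measure.addHaar_preimage_linearMap (μ := volume) hdet s, Tlin_det]
  norm_num

lemma pdfE_mul_inv (u v : ℝ) :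
    gaussianPDF 0 2 ((u - v)/Real.sqrt 2) * gaussianPDF 0 2 ((u + v)/Real.sqrt 2)
      = gaussianPDF 0 2 u * gaussianPDF 0 2 v := by
  have hs : Real.sqrt 2 ^ 2 = 2 := Real.sq_sqrt (by norm_num)
  have h2' : Real.sqrt 2 ≠ 0 := by positivity
  simp only [gaussianPDF]
  rw [← ENNReal.ofReal_mul (gaussianPDFReal_nonneg 0 2 _),
    ← ENNReal.ofReal_mul (gaussianPDFReal_nonneg 0 2 _)]
  congr 1
  simp_rw [pdf_eq]
  rw [mul_mul_mul_comm, ← Real.exp_add, mul_mul_mul_comm, ← Real.exp_add]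
  congr 1
  field_simp
  ring_nf; rw [inv_pow, hs]; ring

lemma pi2_eq : (gaussianReal 0 2).prod (gaussianReal 0 2)
    = (volume : Measure (ℝ×ℝ)).withDensity
        (fun p => gaussianPDF 0 2 p.1 * gaussianPDF 0 2 p.2) := by
  refine (Measure.prod_eq fun s t hs ht => ?_)
  rw [withDensity_apply _ (hs.prod ht), Measure.volume_eq_prod, ← Measure.prod_restrict,
    lintegral_prod_mul (measurable_gaussianPDF 0 2).aemeasurable
      (measurable_gaussianPDF 0 2).aemeasurable,
    gaussianReal_apply 0 two_ne_zero, gaussianReal_apply 0 two_ne_zero]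

lemma pi2_preimage (A : Set (ℝ×ℝ)) (hA : MeasurableSet A) :
    (gaussianReal 0 2).prod (gaussianReal 0 2) (Tlin ⁻¹' A)
      = (gaussianReal 0 2).prod (gaussianReal 0 2) A := by
  have hg : Measurable (fun p : ℝ×ℝ => gaussianPDF 0 2 p.1 * gaussianPDF 0 2 p.2) :=
    ((measurable_gaussianPDF 0 2).comp measurable_fst).mul
      ((measurable_gaussianPDF 0 2).comp measurable_snd)
  rw [pi2_eq, withDensity_apply _ (Tlin_meas hA), withDensity_apply _ hA]
  have hinv : ∀ p : ℝ×ℝ, gaussianPDF 0 2 (Tlin p).1 * gaussianPDF 0 2 (Tlin p).2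
      = gaussianPDF 0 2 p.1 * gaussianPDF 0 2 p.2 := by
    intro p
    rw [Tlin_apply]
    exact pdfE_mul_inv p.1 p.2
  calc ∫⁻ p in Tlin ⁻¹' A, gaussianPDF 0 2 p.1 * gaussianPDF 0 2 p.2
      = ∫⁻ p in Tlin ⁻¹' A, gaussianPDF 0 2 (Tlin p).1 * gaussianPDF 0 2 (Tlin p).2 := by
        refine lintegral_congr fun p => (hinv p).symm
    _ = ∫⁻ y in A, gaussianPDF 0 2 y.1 * gaussianPDF 0 2 y.2
        ∂(Measure.map Tlin (volume : Measure (ℝ×ℝ))) :=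
        (setLIntegral_map hA hg Tlin_meas).symm
    _ = ∫⁻ y in A, gaussianPDF 0 2 y.1 * gaussianPDF 0 2 y.2 ∂(volume : Measure (ℝ×ℝ)) := by
        rw [map_Tlin_volume]

/-- for `Z, W` independent centered Gaussians with variance `2` and `a ∈ ℝ`,
`ℙ(|a + Z| ≥ |W|) = (1/2)(1 + erf(a/(2√2))²)`. -/
theorem statement18 {Ω : Type*} [MeasurableSpace Ω] (P : Measure Ω) [IsProbabilityMeasure P]
    (Z W : Ω → ℝ) (hZ : Measurable Z) (hW : Measurable W)
    (hIndep : IndepFun Z W P)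
    (hZdist : Measure.map Z P = gaussianReal 0 2)
    (hWdist : Measure.map W P = gaussianReal 0 2) (a : ℝ) :
    P {ω | |W ω| ≤ |a + Z ω|} =
      ENNReal.ofReal ((1 / 2) * (1 + erf (a / (2 * Real.sqrt 2)) ^ 2)) := by
  set e := erf (a / (2 * Real.sqrt 2)) with he
  have hS : MeasurableSet {p : ℝ × ℝ | |p.2| ≤ |a + p.1|} :=
    measurableSet_le measurable_snd.abs ((measurable_const.add measurable_fst).abs)
  have hpair : Measure.map (fun ω => (Z ω, W ω)) P
      = (gaussianReal 0 2).prod (gaussianReal 0 2) := by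
    rw [(indepFun_iff_map_prod_eq_prod_map_map hZ.aemeasurable hW.aemeasurable).mp hIndep,
      hZdist, hWdist]
  have h1 : P {ω | |W ω| ≤ |a + Z ω|}
      = (gaussianReal 0 2).prod (gaussianReal 0 2) {p : ℝ × ℝ | |p.2| ≤ |a + p.1|} := by
    rw [← hpair, Measure.map_apply (hZ.prodMk hW) hS]
    rfl
  rw [h1, ← pi2_preimage _ hS]
  set c := a / Real.sqrt 2 with hc
  have hpos : (0:ℝ) < Real.sqrt 2 := by positivity
  have hmul : Real.sqrt 2 * c = a := by rw [hc]; field_simp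
  have hsplit : Tlin ⁻¹' {p : ℝ × ℝ | |p.2| ≤ |a + p.1|}
      = (Set.Ici (-c) ×ˢ Set.Iic c) ∪ (Set.Iic (-c) ×ˢ Set.Ici c) := by
    ext ⟨u, v⟩
    simp only [Set.mem_preimage, Set.mem_setOf_eq, Tlin_apply, Set.mem_union, Set.mem_prod,
      Set.mem_Ici, Set.mem_Iic]
    rw [key_iff a u v, mul_nonneg_iff]
    constructor
    · rintro (⟨h1', h2'⟩ | ⟨h1', h2'⟩)
      · left; constructor <;> nlinarith
      · right; constructor <;> nlinarith
    · rintro (⟨h1', h2'⟩ | ⟨h1', h2'⟩)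
      · left; constructor <;> nlinarith
      · right; constructor <;> nlinarith
  rw [hsplit]
  have hc2 : c / 2 = a / (2 * Real.sqrt 2) := by rw [hc]; ring
  have hval1 : gaussianReal 0 2 (Set.Ici (-c)) = ENNReal.ofReal (1/2 + e/2) := by
    rw [gauss_Ici, neg_div, erf_neg, hc2, ← he]; ring_nf
  have hval2 : gaussianReal 0 2 (Set.Iic c) = ENNReal.ofReal (1/2 + e/2) := by
    rw [gauss_Iic, hc2, ← he]
  have hval3 : gaussianReal 0 2 (Set.Iic (-c)) = ENNReal.ofReal (1/2 - e/2) := by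
    rw [gauss_Iic, neg_div, erf_neg, hc2, ← he]; ring_nf
  have hval4 : gaussianReal 0 2 (Set.Ici c) = ENNReal.ofReal (1/2 - e/2) := by
    rw [gauss_Ici, hc2, ← he]
  have hinter : (gaussianReal 0 2).prod (gaussianReal 0 2)
      ((Set.Ici (-c) ×ˢ Set.Iic c) ∩ (Set.Iic (-c) ×ˢ Set.Ici c)) = 0 := by
    rw [Set.prod_inter_prod, Measure.prod_prod]
    have hsub : Set.Ici (-c) ∩ Set.Iic (-c) = {-c} := by
      rw [Set.Ici_inter_Iic, Set.Icc_self]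
    rw [hsub, gaussianReal_absolutelyContinuous 0 two_ne_zero (measure_singleton _), zero_mul]
  rw [measure_union₀ ((measurableSet_Iic.prod measurableSet_Ici).nullMeasurableSet) hinter,
    Measure.prod_prod, Measure.prod_prod, hval1, hval2, hval3, hval4]
  have hp : 0 ≤ 1/2 + e/2 := by
    have := half_add_erf_nonneg (a / (2 * Real.sqrt 2)); rw [← he] at this; linarith
  have hq : 0 ≤ 1/2 - e/2 := by
    have := half_add_erf_nonneg (-(a / (2 * Real.sqrt 2)))
    rw [erf_neg, ← he] at this; linarith
  rw [← ENNReal.ofReal_mul hp, ← ENNReal.ofReal_mul hq,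
    ← ENNReal.ofReal_add (mul_nonneg hp hp) (mul_nonneg hq hq)]
  congr 1
  ring
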